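/- arXiv:1804.08645 — 2 statements merged into one kernel-verified Lean document; each statement's English description precedes it below -/
import Mathlib

section
/- For any reals x_1,...,x_n and any two distinct indices a ≠ b, the variance satisfies the identity: Var(D) = ((n−1)/n)² Var(D − x_a) + ((n−1)/n)² Var(D − x_b) − ((n−2)/n)² Var(D − x_a − x_b) + (1/n²)(x_a − x_b)², where D = (x_1,...,x_n). -/
/-- Mean of a finite multiset of reals (0 for the empty multiset). -/
noncomputable def mMean (s : Multiset ℝ) : ℝ := s.sum / (Multiset.card s : ℝ)

/-- Variance of a finite multiset of reals (0 for the empty multiset). -/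
noncomputable def mVar (s : Multiset ℝ) : ℝ :=
  ((s.map (fun x => (x - mMean s) ^ 2)).sum) / (Multiset.card s : ℝ)

lemma mVar_eq (s : Multiset ℝ) :
    mVar s = (s.map (fun x => x ^ 2)).sum / (Multiset.card s : ℝ)
      - (s.sum / (Multiset.card s : ℝ)) ^ 2 := by
  by_cases hs : s = 0
  · simp [hs, mVar, mMean]
  · have hc : (Multiset.card s : ℝ) ≠ 0 :=
      Nat.cast_ne_zero.mpr (by simpa [Multiset.card_eq_zero] using hs)
    set μ := mMean s with hμ
    have hexp : (s.map (fun x => (x - μ) ^ 2)).sum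
        = (s.map (fun x => x ^ 2)).sum - 2 * μ * s.sum
          + (Multiset.card s : ℝ) * μ ^ 2 := by
      have : (fun x : ℝ => (x - μ) ^ 2)
          = fun x : ℝ => x ^ 2 + ((-2 * μ) * x + μ ^ 2) := by
        funext x; ring
      rw [this]
      rw [Multiset.sum_map_add, Multiset.sum_map_add]
      have h1 : (s.map fun x => (-2 * μ) * x).sum = (-2 * μ) * s.sum := by
        rw [Multiset.sum_map_mul_left]; simp
      have h2 : (s.map fun _ => μ ^ 2).sum = (Multiset.card s : ℝ) * μ ^ 2 := by
        simp [Multiset.map_const', Multiset.sum_replicate, nsmul_eq_mul]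
      rw [h1, h2]; ring
    rw [mVar, ← hμ, hexp]
    have hμ' : μ = s.sum / (Multiset.card s : ℝ) := rfl
    rw [hμ']
    field_simp [hμ']
    ring

/-- The variance identity relating `Var(D)` to `Var(D − x_a)`, `Var(D − x_b)`,
`Var(D − x_a − x_b)` and `(x_a − x_b)²` for distinct indices `a ≠ b`. -/
theorem stmt3 (n : ℕ) (hn : 2 ≤ n) (x : Fin n → ℝ) (a b : Fin n) (hab : a ≠ b) :
    mVar (List.ofFn x : Multiset ℝ) =
      (((n : ℝ) - 1) / n) ^ 2 * mVar ((List.ofFn x : Multiset ℝ).erase (x a))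
      + (((n : ℝ) - 1) / n) ^ 2 * mVar ((List.ofFn x : Multiset ℝ).erase (x b))
      - (((n : ℝ) - 2) / n) ^ 2 * mVar (((List.ofFn x : Multiset ℝ).erase (x a)).erase (x b))
      + (1 / (n : ℝ) ^ 2) * (x a - x b) ^ 2 := by
  -- decompose the underlying index multiset as a ::ₘ b ::ₘ t
  have ha : a ∈ (Finset.univ : Finset (Fin n)).val := Finset.mem_univ_val a
  have hb' : b ∈ (Finset.univ : Finset (Fin n)).val.erase a :=
    (Multiset.mem_erase_of_ne hab.symm).mpr (Finset.mem_univ_val b)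
  set t := ((Finset.univ : Finset (Fin n)).val.erase a).erase b with ht
  have hdec : (Finset.univ : Finset (Fin n)).val = a ::ₘ b ::ₘ t := by
    rw [ht, Multiset.cons_erase hb', Multiset.cons_erase ha]
  have hofFn : (List.ofFn x : Multiset ℝ)
      = Multiset.map x (Finset.univ : Finset (Fin n)).val := by
    rw [List.ofFn_eq_map]
    rfl
  set m : Multiset ℝ := Multiset.map x t with hm
  have hs : (List.ofFn x : Multiset ℝ) = x a ::ₘ x b ::ₘ m := by
    rw [hofFn, hdec]; simp [hm]
  have hs1 : (List.ofFn x : Multiset ℝ).erase (x a) = x b ::ₘ m := by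
    rw [hs, Multiset.erase_cons_head]
  have hs1' : (List.ofFn x : Multiset ℝ).erase (x b) = x a ::ₘ m := by
    rw [hs, Multiset.cons_swap, Multiset.erase_cons_head]
  have hs2 : ((List.ofFn x : Multiset ℝ).erase (x a)).erase (x b) = m := by
    rw [hs1, Multiset.erase_cons_head]
  -- cardinalities
  have hcards : Multiset.card (List.ofFn x : Multiset ℝ) = n := by simp
  have hcardm : (Multiset.card m : ℝ) = (n : ℝ) - 2 := by
    have : Multiset.card (List.ofFn x : Multiset ℝ) = Multiset.card m + 2 := by
      rw [hs]; simp
    rw [hcards] at this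
    have : (n : ℝ) = (Multiset.card m : ℝ) + 2 := by exact_mod_cast this
    linarith
  set S := m.sum with hS
  set Q := (m.map (fun x => x ^ 2)).sum with hQ
  set p := x a
  set q := x b
  have hVs : mVar (List.ofFn x : Multiset ℝ)
      = (p ^ 2 + q ^ 2 + Q) / (n : ℝ) - ((p + q + S) / (n : ℝ)) ^ 2 := by
    rw [mVar_eq, hs]; simp [hcardm]
    rw [show ((n : ℝ) - 2 + 1 + 1) = (n : ℝ) by ring, hS, hQ]
    ring
  have hVs1 : mVar ((List.ofFn x : Multiset ℝ).erase (x a))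
      = (q ^ 2 + Q) / ((n : ℝ) - 1) - ((q + S) / ((n : ℝ) - 1)) ^ 2 := by
    rw [mVar_eq, hs1]; simp [hcardm]
    rw [show ((n : ℝ) - 2 + 1) = (n : ℝ) - 1 by ring, hS, hQ]
  have hVs1' : mVar ((List.ofFn x : Multiset ℝ).erase (x b))
      = (p ^ 2 + Q) / ((n : ℝ) - 1) - ((p + S) / ((n : ℝ) - 1)) ^ 2 := by
    rw [mVar_eq, hs1']; simp [hcardm]
    rw [show ((n : ℝ) - 2 + 1) = (n : ℝ) - 1 by ring, hS, hQ]
  have hVs2 : mVar (((List.ofFn x : Multiset ℝ).erase (x a)).erase (x b))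
      = Q / ((n : ℝ) - 2) - (S / ((n : ℝ) - 2)) ^ 2 := by
    rw [mVar_eq, hs2, hcardm]
  rw [hVs, hVs1, hVs1', hVs2]
  have hn0 : (n : ℝ) ≠ 0 := by positivity
  have hn1 : (n : ℝ) - 1 ≠ 0 := by
    have : (2 : ℝ) ≤ (n : ℝ) := by exact_mod_cast hn
    linarith
  rcases eq_or_lt_of_le hn with h2 | h3
  · -- n = 2
    have hn2 : (n : ℝ) = 2 := by exact_mod_cast h2.symm
    have hm0 : m = 0 := by
      have : (Multiset.card m : ℝ) = 0 := by rw [hcardm, hn2]; ring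
      simpa using this
    have hS0 : S = 0 := by rw [hS, hm0]; simp
    have hQ0 : Q = 0 := by rw [hQ, hm0]; simp
    rw [hS0, hQ0, hn2]
    norm_num
    ring
  · have hn2 : (n : ℝ) - 2 ≠ 0 := by
      have : (2 : ℝ) < (n : ℝ) := by exact_mod_cast h3
      linarith
    field_simp
    ring
end

section
/- Let g: ℝ^{<ℕ} → ℝ be the Sensitivity-Preprocessing Function of the variance function with single parameter Δ ≥ 0 and g(∅) = 0. Then for every finite database D of reals, g(D) ≤ Var(D). -/
variable {α : Type*} [DecidableEq α]

/-- The Sensitivity-Preprocessing Function of `f` with individual sensitivity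
parameters `Δ`: `g ∅ = f ∅`, and for nonempty `D`, `g D = Upper D` if
`Upper D ≤ f D`, `g D = Lower D` if `Lower D ≥ f D`, and `g D = f D` otherwise,
where `Upper D = min_{a ∈ D} (g (D.erase a) + Δ a)` and
`Lower D = max_{a ∈ D} (g (D.erase a) - Δ a)`. -/
noncomputable def SPF (f : Finset α → ℝ) (Δ : α → ℝ) : Finset α → ℝ := fun D =>
  if h : D.Nonempty then
    let U : ℝ := D.attach.inf' (Finset.attach_nonempty_iff.mpr h)
      (fun a => SPF f Δ (D.erase a.1) + Δ a.1)
    let L : ℝ := D.attach.sup' (Finset.attach_nonempty_iff.mpr h)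
      (fun a => SPF f Δ (D.erase a.1) - Δ a.1)
    if U ≤ f D then U
    else if f D ≤ L then L
    else f D
  else f ∅
termination_by D => D.card
decreasing_by all_goals exact Finset.card_erase_lt_of_mem a.2

/- ### Auxiliary lemmas -/

lemma SPF_empty (f : Finset α → ℝ) (Δ : α → ℝ) : SPF f Δ ∅ = f ∅ := by
  rw [SPF]; simp

lemma SPF_of_nonempty (f : Finset α → ℝ) (Δ : α → ℝ) (D : Finset α) (h : D.Nonempty) :
    SPF f Δ D =
      if (D.attach.inf' (Finset.attach_nonempty_iff.mpr h)
          (fun a => SPF f Δ (D.erase a.1) + Δ a.1)) ≤ f D then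
        D.attach.inf' (Finset.attach_nonempty_iff.mpr h)
          (fun a => SPF f Δ (D.erase a.1) + Δ a.1)
      else if f D ≤ D.attach.sup' (Finset.attach_nonempty_iff.mpr h)
          (fun a => SPF f Δ (D.erase a.1) - Δ a.1) then
        D.attach.sup' (Finset.attach_nonempty_iff.mpr h)
          (fun a => SPF f Δ (D.erase a.1) - Δ a.1)
      else f D := by
  rw [SPF]; simp [h]

lemma sum_sq_expand (t : Multiset ℝ) (c : ℝ) :
    (t.map (fun x => (x - c) ^ 2)).sum
      = (t.map (fun x => x ^ 2)).sum - 2 * c * t.sum + (Multiset.card t : ℝ) * c ^ 2 := by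
  induction t using Multiset.induction_on with
  | empty => simp
  | cons a s ih => simp [ih]; ring

lemma mean_min_sq (t : Multiset ℝ) (c : ℝ) :
    (t.map (fun x => (x - mMean t) ^ 2)).sum ≤ (t.map (fun x => (x - c) ^ 2)).sum := by
  rcases eq_or_ne t 0 with rfl | h
  · simp
  · have hn : (0:ℝ) < (Multiset.card t : ℝ) := by
      have := Multiset.card_pos.mpr h
      exact_mod_cast this
    rw [sum_sq_expand, sum_sq_expand]
    have hμ : mMean t = t.sum / (Multiset.card t : ℝ) := rfl
    set n := (Multiset.card t : ℝ)
    set S := t.sum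
    rw [hμ]
    have key : 0 ≤ n * (c - S / n) ^ 2 := by positivity
    have hexp : n * (c - S / n)^2 = n * c^2 - 2*c*S + S^2/n := by
      field_simp; ring
    have h1 : n * (S/n)^2 = S^2/n := by field_simp
    have h2 : 2*(S/n)*S = 2*(S^2/n) := by field_simp
    linarith

lemma card_mul_mVar (t : Multiset ℝ) :
    (Multiset.card t : ℝ) * mVar t = (t.map (fun x => (x - mMean t) ^ 2)).sum := by
  rcases eq_or_ne t 0 with rfl | h
  · simp [mVar]
  · have hn : ((Multiset.card t : ℝ)) ≠ 0 := by
      have := Multiset.card_pos.mpr h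
      positivity
    rw [mVar]; field_simp

lemma var_erase (s : Multiset ℝ) (a : ℝ) (ha : a ∈ s) :
    ((Multiset.card s : ℝ) - 1) * mVar (s.erase a) ≤ (Multiset.card s : ℝ) * mVar s := by
  have h1 : 1 ≤ Multiset.card s := Multiset.card_pos.mpr (by rintro rfl; simp at ha)
  have hcard : (Multiset.card (s.erase a) : ℝ) = (Multiset.card s : ℝ) - 1 := by
    rw [Multiset.card_erase_of_mem ha, Nat.pred_eq_sub_one, Nat.cast_sub h1, Nat.cast_one]
  calc ((Multiset.card s : ℝ) - 1) * mVar (s.erase a)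
      = ((s.erase a).map (fun x => (x - mMean (s.erase a)) ^ 2)).sum := by
        rw [← hcard, card_mul_mVar]
    _ ≤ ((s.erase a).map (fun x => (x - mMean s) ^ 2)).sum := mean_min_sq _ _
    _ ≤ (s.map (fun x => (x - mMean s) ^ 2)).sum := by
        set μ := mMean s with hμ
        have hs : s = a ::ₘ s.erase a := (Multiset.cons_erase ha).symm
        conv_rhs => rw [hs]
        rw [Multiset.map_cons, Multiset.sum_cons]
        nlinarith [sq_nonneg (a - μ)]
    _ = (Multiset.card s : ℝ) * mVar s := (card_mul_mVar s).symm

lemma card_erase_real {D : Finset α} {a : α} (ha : a ∈ D) :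
    ((D.erase a).card : ℝ) = (D.card : ℝ) - 1 := by
  have h1 : 1 ≤ D.card := Finset.card_pos.mpr ⟨a, ha⟩
  rw [Finset.card_erase_of_mem ha, Nat.cast_sub h1, Nat.cast_one]

lemma spf_le_card (f : Finset α → ℝ) (hf : f ∅ ≤ 0) (Δ : ℝ) (hΔ : 0 ≤ Δ) (E : Finset α) :
    SPF f (fun _ => Δ) E ≤ E.card * Δ := by
  induction E using Finset.strongInduction with
  | _ E ih =>
    rcases E.eq_empty_or_nonempty with rfl | h
    · simpa [SPF_empty] using hf
    · have key : ∀ a ∈ E, SPF f (fun _ => Δ) (E.erase a) + Δ ≤ E.card * Δ := by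
        intro a ha
        have h1 := ih (E.erase a) (Finset.erase_ssubset ha)
        have h2 := card_erase_real ha
        rw [h2] at h1
        nlinarith
      rw [SPF_of_nonempty f _ E h]
      split_ifs with h1 h2
      · obtain ⟨a, ha⟩ := h
        exact le_trans (Finset.inf'_le _ (Finset.mem_attach _ ⟨a, ha⟩)) (key a ha)
      · apply Finset.sup'_le
        intro b _
        have := key b.1 b.2
        linarith
      · obtain ⟨a, ha⟩ := h
        push_neg at h1
        have h3 := Finset.inf'_le (fun b : {x // x ∈ E} => SPF f (fun _ => Δ) (E.erase b.1) + Δ)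
          (Finset.mem_attach _ ⟨a, ha⟩)
        have := key a ha
        linarith

lemma mVar_map_erase (val : α → ℝ) (D : Finset α) (a : α) (ha : a ∈ D) :
    (D.erase a).val.map val = (D.val.map val).erase (val a) := by
  rw [Finset.erase_val, Multiset.map_erase_of_mem val D.val ha]

/-- The Sensitivity-Preprocessing Function of variance (with `g ∅ = Var ∅ = 0`)
never exceeds the true variance. Entries are individuals `a : α` carrying real
data `val a`; the variance of a database is the variance of its values. -/
theorem stmt16 (val : α → ℝ) (Δ : ℝ) (hΔ : 0 ≤ Δ) (D : Finset α) :
    SPF (fun E => mVar (E.val.map val)) (fun _ => Δ) D ≤ mVar (D.val.map val) := by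
  set f : Finset α → ℝ := fun E => mVar (E.val.map val) with hf
  have hf0 : f ∅ ≤ 0 := by simp [hf, mVar]
  induction D using Finset.strongInduction with
  | _ D ih =>
    rcases D.eq_empty_or_nonempty with rfl | h
    · rw [SPF_empty]
    · -- the key bound on the Lower candidate
      have key : ∀ a ∈ D, SPF f (fun _ => Δ) (D.erase a) - Δ ≤ f D := by
        intro a ha
        set g' := SPF f (fun _ => Δ) (D.erase a) with hg'
        have hIH : g' ≤ f (D.erase a) := ih (D.erase a) (Finset.erase_ssubset ha)
        have hcard : ((D.erase a).card : ℝ) = (D.card : ℝ) - 1 := card_erase_real ha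
        have hle : g' ≤ ((D.card : ℝ) - 1) * Δ := by
          have := spf_le_card f hf0 Δ hΔ (D.erase a)
          rw [hcard] at this
          exact this
        have hvm : ((D.card : ℝ) - 1) * f (D.erase a) ≤ (D.card : ℝ) * f D := by
          have hmem : val a ∈ D.val.map val :=
            Multiset.mem_map.mpr ⟨a, ha, rfl⟩
          have := var_erase (D.val.map val) (val a) hmem
          rw [Multiset.card_map] at this
          simp only [hf]
          rwa [mVar_map_erase val D a ha]
        have hm : (0:ℝ) ≤ (D.card : ℝ) - 1 := by
          have : 1 ≤ D.card := Finset.card_pos.mpr ⟨a, ha⟩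
          have : (1:ℝ) ≤ (D.card : ℝ) := by exact_mod_cast this
          linarith
        by_contra hcon
        push_neg at hcon
        have hstep : f D + Δ < f (D.erase a) := by linarith
        have hprod : 0 ≤ ((D.card : ℝ) - 1) * (f (D.erase a) - f D - Δ) :=
          mul_nonneg hm (by linarith)
        nlinarith
      rw [SPF_of_nonempty f _ D h]
      split_ifs with h1 h2
      · exact h1
      · apply Finset.sup'_le
        intro b _
        exact key b.1 b.2
      · exact le_refl _
end
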